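/- Let d, L ≥ 1, and let A₁, A₂, A₃, Y ∈ ℝ^{d×L} and W, W_{OV} ∈ ℝ^{d×d}. Set 𝔸 := A₁ᵀ ⊗ A₂ᵀ ∈ ℝ^{L²×d²} (Kronecker product), and for j₀ ∈ {1,…,L} let 𝔸_{j₀} ∈ ℝ^{L×d²} denote the j₀-th block of L consecutive rows of 𝔸. Define, for j₀ ∈ {1,…,L} and i₀ ∈ {1,…,d}: u(W)_{j₀} := exp(𝔸_{j₀} vec(W)) ∈ ℝ^L, α(W)_{j₀} := ⟨u(W)_{j₀}, 1_L⟩, f(W)_{j₀} := α(W)_{j₀}^{-1} u(W)_{j₀}, h(W_{OV})_{i₀} := A₃ᵀ (W_{OV}ᵀ)_{*,i₀} ∈ ℝ^L, and c(W)_{j₀,i₀} := ⟨f(W)_{j₀}, h(W_{OV})_{i₀}⟩ − (Yᵀ)_{j₀,i₀}. Then the gradient with respect to vec(W) ∈ ℝ^{d²} of the loss G(W) := (1/2) Σ_{j₀=1}^{L} Σ_{i₀=1}^{d} c(W)_{j₀,i₀}² is ∇_{vec(W)} G(W) = Σ_{j₀=1}^{L} Σ_{i₀=1}^{d} c(W)_{j₀,i₀}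 · 𝔸_{j₀}ᵀ ( diag(f(W)_{j₀}) − f(W)_{j₀} f(W)_{j₀}ᵀ ) h(W_{OV})_{i₀}. -/

import Mathlib

open Matrix BigOperators

namespace DiTGrad

variable {d L : ℕ}

/-- The `j₀`-th block of `L` consecutive rows of `𝔸 = A₁ᵀ ⊗ A₂ᵀ`. -/
noncomputable def Ablock (A₁ A₂ : Matrix (Fin d) (Fin L) ℝ) (j₀ : Fin L) :
    Matrix (Fin L) (Fin d × Fin d) ℝ :=
  Matrix.of fun j p => Matrix.kroneckerMap (· * ·) A₁ᵀ A₂ᵀ (j₀, j) p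

/-- `u(W)_{j₀} = exp(𝔸_{j₀} vec(W))`. -/
noncomputable def uVec (A₁ A₂ : Matrix (Fin d) (Fin L) ℝ) (j₀ : Fin L)
    (w : Fin d × Fin d → ℝ) : Fin L → ℝ :=
  fun j => Real.exp ((Ablock A₁ A₂ j₀).mulVec w j)

/-- `α(W)_{j₀} = ⟨u(W)_{j₀}, 1_L⟩`. -/
noncomputable def alphaVal (A₁ A₂ : Matrix (Fin d) (Fin L) ℝ) (j₀ : Fin L)
    (w : Fin d × Fin d → ℝ) : ℝ :=
  ∑ j, uVec A₁ A₂ j₀ w j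

/-- `f(W)_{j₀} = α(W)_{j₀}⁻¹ u(W)_{j₀}`. -/
noncomputable def fVec (A₁ A₂ : Matrix (Fin d) (Fin L) ℝ) (j₀ : Fin L)
    (w : Fin d × Fin d → ℝ) : Fin L → ℝ :=
  fun j => (alphaVal A₁ A₂ j₀ w)⁻¹ * uVec A₁ A₂ j₀ w j

/-- `h(W_{OV})_{i₀} = A₃ᵀ (W_{OV}ᵀ)_{*,i₀}`. -/
noncomputable def hVec (A₃ : Matrix (Fin d) (Fin L) ℝ) (WOV : Matrix (Fin d) (Fin d) ℝ)
    (i₀ : Fin d) : Fin L → ℝ :=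
  fun j => ∑ i, A₃ i j * WOV i₀ i

/-- `c(W)_{j₀,i₀} = ⟨f(W)_{j₀}, h(W_{OV})_{i₀}⟩ − (Yᵀ)_{j₀,i₀}`. -/
noncomputable def cVal (A₁ A₂ A₃ Y : Matrix (Fin d) (Fin L) ℝ)
    (WOV : Matrix (Fin d) (Fin d) ℝ) (j₀ : Fin L) (i₀ : Fin d)
    (w : Fin d × Fin d → ℝ) : ℝ :=
  (∑ j, fVec A₁ A₂ j₀ w j * hVec A₃ WOV i₀ j) - Yᵀ j₀ i₀

/-- The simplified DiT loss `G(W) = (1/2) Σ_{j₀,i₀} c(W)_{j₀,i₀}²` as a function of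
`vec(W)`. -/
noncomputable def lossG (A₁ A₂ A₃ Y : Matrix (Fin d) (Fin L) ℝ)
    (WOV : Matrix (Fin d) (Fin d) ℝ) (w : Fin d × Fin d → ℝ) : ℝ :=
  (1 / 2) * ∑ j₀, ∑ i₀, (cVal A₁ A₂ A₃ Y WOV j₀ i₀ w) ^ 2

lemma key_sum {n : ℕ} (a : ℝ) (u h b : Fin n → ℝ) :
    ∑ j, h j * (a⁻¹ * (u j * b j) + u j * (-(a ^ 2)⁻¹ * ∑ j', u j' * b j'))
      = ∑ j, b j * (a⁻¹ * u j * h j - a⁻¹ * u j * ∑ j', (a⁻¹ * u j') * h j') := by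
  set T := ∑ j', u j' * b j' with hT
  set S := ∑ j', u j' * h j' with hS
  have h3 : (∑ j', (a⁻¹ * u j') * h j') = a⁻¹ * S := by
    rw [hS, Finset.mul_sum]; exact Finset.sum_congr rfl fun j _ => by ring
  rw [h3, ← sub_eq_zero, ← Finset.sum_sub_distrib]
  have step : ∀ j : Fin n,
      h j * (a⁻¹ * (u j * b j) + u j * (-(a ^ 2)⁻¹ * T))
        - b j * (a⁻¹ * u j * h j - a⁻¹ * u j * (a⁻¹ * S))
      = (-(a ^ 2)⁻¹ * T) * (u j * h j) + (a⁻¹ * (a⁻¹ * S)) * (u j * b j) :=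
    fun j => by ring
  rw [Finset.sum_congr rfl fun j _ => step j, Finset.sum_add_distrib,
    ← Finset.mul_sum, ← Finset.mul_sum, ← hS, ← hT]
  ring

/-- Low-rank decomposition of the DiT gradient:
`∇_{vec(W)} G(W) = Σ_{j₀,i₀} c_{j₀,i₀} 𝔸_{j₀}ᵀ (diag(f_{j₀}) − f_{j₀} f_{j₀}ᵀ) h_{i₀}`,
stated componentwise at each coordinate `p` of `vec(W)`. -/
theorem dit_gradient_low_rank_decomposition
    (d L : ℕ) (hd : 1 ≤ d) (hL : 1 ≤ L)
    (A₁ A₂ A₃ Y : Matrix (Fin d) (Fin L) ℝ) (W WOV : Matrix (Fin d) (Fin d) ℝ)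
    (p : Fin d × Fin d) :
    fderiv ℝ (lossG A₁ A₂ A₃ Y WOV) (fun q : Fin d × Fin d => W q.1 q.2) (Pi.single p 1)
      = ∑ j₀, ∑ i₀,
          cVal A₁ A₂ A₃ Y WOV j₀ i₀ (fun q => W q.1 q.2) *
            ∑ j, Ablock A₁ A₂ j₀ j p *
              (fVec A₁ A₂ j₀ (fun q => W q.1 q.2) j * hVec A₃ WOV i₀ j
                - fVec A₁ A₂ j₀ (fun q => W q.1 q.2) j *
                    ∑ j', fVec A₁ A₂ j₀ (fun q => W q.1 q.2) j' * hVec A₃ WOV i₀ j') := by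
  haveI : NeZero L := ⟨by omega⟩
  set w₀ : Fin d × Fin d → ℝ := fun q : Fin d × Fin d => W q.1 q.2 with hw₀
  set ℓ : Fin L → Fin L → ((Fin d × Fin d → ℝ) →L[ℝ] ℝ) := fun j₀ j =>
    ∑ q, Ablock A₁ A₂ j₀ j q • ContinuousLinearMap.proj q with hℓdef
  have hℓ : ∀ (j₀ j : Fin L),
      HasFDerivAt (fun w => (Ablock A₁ A₂ j₀).mulVec w j) (ℓ j₀ j) w₀ := by
    intro j₀ j
    have h1 : (fun w : Fin d × Fin d → ℝ => (Ablock A₁ A₂ j₀).mulVec w j)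
        = fun w => ∑ q, Ablock A₁ A₂ j₀ j q * w q := by
      funext w; simp [Matrix.mulVec, dotProduct]
    rw [h1]
    exact HasFDerivAt.fun_sum fun q _ => (hasFDerivAt_apply q w₀).const_mul _
  have hu : ∀ (j₀ j : Fin L),
      HasFDerivAt (fun w => uVec A₁ A₂ j₀ w j) (uVec A₁ A₂ j₀ w₀ j • ℓ j₀ j) w₀ :=
    fun j₀ j => (hℓ j₀ j).exp
  have hα : ∀ (j₀ : Fin L),
      HasFDerivAt (fun w => alphaVal A₁ A₂ j₀ w)
        (∑ j, uVec A₁ A₂ j₀ w₀ j • ℓ j₀ j) w₀ :=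
    fun j₀ => HasFDerivAt.fun_sum fun j _ => hu j₀ j
  have hαpos : ∀ j₀, 0 < alphaVal A₁ A₂ j₀ w₀ := fun j₀ =>
    Finset.sum_pos (fun j _ => Real.exp_pos _) Finset.univ_nonempty
  have hinv : ∀ (j₀ : Fin L),
      HasFDerivAt (fun w => (alphaVal A₁ A₂ j₀ w)⁻¹)
        ((-(alphaVal A₁ A₂ j₀ w₀ ^ 2)⁻¹) • ∑ j, uVec A₁ A₂ j₀ w₀ j • ℓ j₀ j) w₀ :=
    fun j₀ => (hasDerivAt_inv (hαpos j₀).ne').comp_hasFDerivAt w₀ (hα j₀)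
  have hf : ∀ (j₀ j : Fin L),
      HasFDerivAt (fun w => fVec A₁ A₂ j₀ w j)
        ((alphaVal A₁ A₂ j₀ w₀)⁻¹ • (uVec A₁ A₂ j₀ w₀ j • ℓ j₀ j)
          + uVec A₁ A₂ j₀ w₀ j •
              ((-(alphaVal A₁ A₂ j₀ w₀ ^ 2)⁻¹) • ∑ j', uVec A₁ A₂ j₀ w₀ j' • ℓ j₀ j')) w₀ :=
    fun j₀ j => (hinv j₀).mul (hu j₀ j)
  have hc : ∀ (j₀ : Fin L) (i₀ : Fin d),
      HasFDerivAt (fun w => cVal A₁ A₂ A₃ Y WOV j₀ i₀ w)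
        (∑ j, hVec A₃ WOV i₀ j •
          ((alphaVal A₁ A₂ j₀ w₀)⁻¹ • (uVec A₁ A₂ j₀ w₀ j • ℓ j₀ j)
            + uVec A₁ A₂ j₀ w₀ j •
                ((-(alphaVal A₁ A₂ j₀ w₀ ^ 2)⁻¹) • ∑ j', uVec A₁ A₂ j₀ w₀ j' • ℓ j₀ j'))) w₀ :=
    fun j₀ i₀ =>
      (HasFDerivAt.fun_sum fun j _ => (hf j₀ j).mul_const (hVec A₃ WOV i₀ j)).sub_const _
  have hG : HasFDerivAt (lossG A₁ A₂ A₃ Y WOV)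
      ((1 / 2 : ℝ) • ∑ j₀, ∑ i₀,
        ((2 : ℕ) * cVal A₁ A₂ A₃ Y WOV j₀ i₀ w₀ ^ (2 - 1)) •
          (∑ j, hVec A₃ WOV i₀ j •
            ((alphaVal A₁ A₂ j₀ w₀)⁻¹ • (uVec A₁ A₂ j₀ w₀ j • ℓ j₀ j)
              + uVec A₁ A₂ j₀ w₀ j •
                  ((-(alphaVal A₁ A₂ j₀ w₀ ^ 2)⁻¹) •
                    ∑ j', uVec A₁ A₂ j₀ w₀ j' • ℓ j₀ j')))) w₀ := by
    have := HasFDerivAt.const_mul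
      (HasFDerivAt.fun_sum fun j₀ (_ : j₀ ∈ Finset.univ) =>
        HasFDerivAt.fun_sum fun i₀ (_ : i₀ ∈ Finset.univ) =>
          (hasDerivAt_pow 2 (cVal A₁ A₂ A₃ Y WOV j₀ i₀ w₀)).comp_hasFDerivAt w₀ (hc j₀ i₀))
      (1 / 2 : ℝ)
    exact this
  rw [hG.fderiv]
  have hℓapp : ∀ (j₀ j : Fin L), (ℓ j₀ j) (Pi.single p 1) = Ablock A₁ A₂ j₀ j p := by
    intro j₀ j
    simp [hℓdef, ContinuousLinearMap.sum_apply, Pi.single_apply]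
  simp only [ContinuousLinearMap.smul_apply, ContinuousLinearMap.sum_apply,
    ContinuousLinearMap.add_apply, hℓapp, smul_eq_mul]
  rw [Finset.mul_sum]
  refine Finset.sum_congr rfl fun j₀ _ => ?_
  rw [Finset.mul_sum]
  refine Finset.sum_congr rfl fun i₀ _ => ?_
  have hkey := key_sum (alphaVal A₁ A₂ j₀ w₀) (uVec A₁ A₂ j₀ w₀)
    (hVec A₃ WOV i₀) (fun j => Ablock A₁ A₂ j₀ j p)
  simp only [fVec]
  rw [← hkey]
  push_cast
  ring
end DiTGrad
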